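/- Let π_Q(g) := |X_g|/(z·|G|) for g ∈ G*. Then ∑_{g∈G*} π_Q(g) = 1, π_Q satisfies detailed balance for the dual Burnside kernel, i.e. π_Q(g)·Q(g,h) = π_Q(h)·Q(h,g) for all g,h ∈ G*, and consequently π_Q is stationary for Q: ∑_{g∈G*} π_Q(g)·Q(g,h) = π_Q(h) for every h ∈ G*. -/

import Mathlib

open Finset

variable (G X : Type) [Group G] [Fintype G] [DecidableEq G]
  [Fintype X] [DecidableEq X] [Nonempty X] [MulAction G X]

noncomputable section

/-- The fixed-point set `X_g = {x ∈ X : g • x = x}` of a group element. -/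
def fixedPts (g : G) : Finset X := Finset.univ.filter fun x => g • x = x

/-- The stabilizer `G_x = {g ∈ G : g • x = x}` of a point, as a finset. -/
def stab (x : X) : Finset G := Finset.univ.filter fun g => g • x = x

/-- `G* = {g ∈ G : X_g ≠ ∅}`. -/
def Gstar : Finset G := Finset.univ.filter fun g => (fixedPts G X g).Nonempty

/-- The dual Burnside kernel `Q(g,h) = ∑_{x ∈ X_g ∩ X_h} 1/(|X_g|·|G_x|)`. -/
def Q (g h : G) : ℝ :=
  ∑ x ∈ fixedPts G X g ∩ fixedPts G X h,
    1 / (((fixedPts G X g).card : ℝ) * ((stab G X x).card : ℝ))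

/-- `z = |X/G|`, the number of `G`-orbits on `X`. -/
def numOrbits : ℕ := Nat.card (Quotient (MulAction.orbitRel G X))

/-- The dual stationary law `π_Q(g) = |X_g| / (z·|G|)`. -/
def piQ (g : G) : ℝ :=
  ((fixedPts G X g).card : ℝ) / ((numOrbits G X : ℝ) * (Fintype.card G : ℝ))

lemma stab_card_pos (x : X) : 0 < (stab G X x).card := by
  refine Finset.card_pos.mpr ⟨1, ?_⟩
  simp [stab]

lemma numOrbits_pos : 0 < numOrbits G X := by
  unfold numOrbits
  have : Nonempty (Quotient (MulAction.orbitRel G X)) :=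
    ⟨Quotient.mk _ (Classical.arbitrary X)⟩
  exact Nat.card_pos

lemma burnside : ∑ g : G, ((fixedPts G X g).card : ℝ) =
    (numOrbits G X : ℝ) * (Fintype.card G : ℝ) := by
  classical
  have h := MulAction.sum_card_fixedBy_eq_card_orbits_mul_card_group G X
  have hcard : ∀ g : G, Fintype.card (MulAction.fixedBy X g) = (fixedPts G X g).card := by
    intro g
    have he : fixedPts G X g = (MulAction.fixedBy X g).toFinset := by
      ext x; rw [Set.mem_toFinset]; simp [fixedPts]
    rw [he, Set.toFinset_card]
  have hz : Fintype.card (Quotient (MulAction.orbitRel G X)) = numOrbits G X := by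
    unfold numOrbits; rw [Nat.card_eq_fintype_card]
  calc ∑ g : G, ((fixedPts G X g).card : ℝ)
      = ((∑ g : G, Fintype.card (MulAction.fixedBy X g) : ℕ) : ℝ) := by
        push_cast; exact Finset.sum_congr rfl fun g _ => by rw [hcard g]
    _ = _ := by rw [h, hz]; push_cast; ring

/-- key rewriting of `π_Q(g)·Q(g,h)` when `X_g ≠ ∅`. -/
lemma piQ_mul_Q (g h : G) (hg : g ∈ Gstar G X) :
    piQ G X g * Q G X g h =
      ∑ x ∈ fixedPts G X g ∩ fixedPts G X h,
        1 / ((numOrbits G X : ℝ) * (Fintype.card G : ℝ) * ((stab G X x).card : ℝ)) := by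
  have hXg : (0 : ℝ) < (fixedPts G X g).card := by
    have := (Finset.mem_filter.mp hg).2
    exact_mod_cast Finset.card_pos.mpr this
  have hz : (0 : ℝ) < (numOrbits G X : ℝ) := by exact_mod_cast numOrbits_pos G X
  have hG : (0 : ℝ) < (Fintype.card G : ℝ) := by exact_mod_cast Fintype.card_pos
  unfold piQ Q
  rw [Finset.mul_sum]
  refine Finset.sum_congr rfl fun x _ => ?_
  have hs : (0 : ℝ) < ((stab G X x).card : ℝ) := by exact_mod_cast stab_card_pos G X x
  field_simp

/-- `π_Q` sums to `1` over `G*`, satisfies detailed balance for `Q`, and is stationary for `Q`. -/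
theorem piQ_sum_one_detailed_balance_stationary :
    (∑ g ∈ Gstar G X, piQ G X g) = 1 ∧
    (∀ g ∈ Gstar G X, ∀ h ∈ Gstar G X,
      piQ G X g * Q G X g h = piQ G X h * Q G X h g) ∧
    (∀ h ∈ Gstar G X, ∑ g ∈ Gstar G X, piQ G X g * Q G X g h = piQ G X h) := by
  have hz : (0 : ℝ) < (numOrbits G X : ℝ) := by exact_mod_cast numOrbits_pos G X
  have hG : (0 : ℝ) < (Fintype.card G : ℝ) := by exact_mod_cast Fintype.card_pos
  have hsum1 : (∑ g ∈ Gstar G X, piQ G X g) = 1 := by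
    have h0 : ∀ g ∈ (Finset.univ : Finset G), g ∉ Gstar G X → piQ G X g = 0 := by
      intro g _ hg
      have : (fixedPts G X g).card = 0 := by
        rw [Finset.card_eq_zero]
        by_contra hne
        exact hg (Finset.mem_filter.mpr ⟨Finset.mem_univ _,
          Finset.nonempty_of_ne_empty hne⟩)
      simp [piQ, this]
    have hext : ∑ g ∈ Gstar G X, piQ G X g = ∑ g : G, piQ G X g :=
      Finset.sum_subset (Finset.subset_univ _) h0
    rw [hext]
    unfold piQ
    rw [← Finset.sum_div, burnside]
    field_simp
  refine ⟨hsum1, ?_, ?_⟩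
  · intro g hg h hh
    rw [piQ_mul_Q G X g h hg, piQ_mul_Q G X h g hh, Finset.inter_comm]
  · intro h hh
    set c : X → ℝ := fun x =>
      1 / ((numOrbits G X : ℝ) * (Fintype.card G : ℝ) * ((stab G X x).card : ℝ)) with hc
    have step1 : ∑ g ∈ Gstar G X, piQ G X g * Q G X g h =
        ∑ g ∈ Gstar G X, ∑ x ∈ fixedPts G X h, (if g ∈ stab G X x then c x else 0) := by
      refine Finset.sum_congr rfl fun g hg => ?_
      rw [piQ_mul_Q G X g h hg]
      have : ∀ x, (if g ∈ stab G X x then c x else 0) =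
          (if x ∈ fixedPts G X g then c x else 0) := by
        intro x; simp [fixedPts, stab]
      simp_rw [this]
      rw [Finset.sum_ite_mem, Finset.inter_comm]
    have hsub : ∀ x : X, stab G X x ⊆ Gstar G X := by
      intro x g hgx
      have : g • x = x := (Finset.mem_filter.mp hgx).2
      exact Finset.mem_filter.mpr ⟨Finset.mem_univ _,
        ⟨x, Finset.mem_filter.mpr ⟨Finset.mem_univ _, this⟩⟩⟩
    have step2 : ∑ g ∈ Gstar G X, ∑ x ∈ fixedPts G X h, (if g ∈ stab G X x then c x else 0)
        = ∑ x ∈ fixedPts G X h, ((stab G X x).card : ℝ) * c x := by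
      rw [Finset.sum_comm]
      refine Finset.sum_congr rfl fun x _ => ?_
      rw [Finset.sum_ite_mem, Finset.inter_eq_right.mpr (hsub x), Finset.sum_const,
        nsmul_eq_mul]
    rw [step1, step2]
    have : ∀ x ∈ fixedPts G X h, ((stab G X x).card : ℝ) * c x =
        1 / ((numOrbits G X : ℝ) * (Fintype.card G : ℝ)) := by
      intro x _
      have hs : (0 : ℝ) < ((stab G X x).card : ℝ) := by exact_mod_cast stab_card_pos G X x
      rw [hc]
      field_simp
    rw [Finset.sum_congr rfl this, Finset.sum_const, nsmul_eq_mul]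
    unfold piQ
    field_simp

end
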